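/- Let ξ : ℝ → ℂ be twice differentiable with |ξ(t)| ≠ 1 for all t, satisfying the geodesic equation ξ''(t) = (conj(ξ(t))/(1 − |ξ(t)|²) + 3·conj(ξ(t))/(1 + |ξ(t)|²))·(ξ'(t))². Then the function I₂(t) = ((1 − |ξ(t)|²)/(1 + |ξ(t)|²)³)·Im(conj(ξ(t))·ξ'(t)) is constant in t. -/

import Mathlib

/-- The angular momentum `I₂ = ((1 − |ξ|²)/(1 + |ξ|²)³)·Im(ξ̄ ξ')` is a first integral
of the geodesic flow `ξ'' = (ξ̄/(1 − |ξ|²) + 3ξ̄/(1 + |ξ|²))(ξ')²` on the twisting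
holomorphic sphere. -/
theorem angular_momentum_first_integral (ξ ξ' ξ'' : ℝ → ℂ)
    (hξ : ∀ t : ℝ, HasDerivAt ξ (ξ' t) t)
    (hξ' : ∀ t : ℝ, HasDerivAt ξ' (ξ'' t) t)
    (hne : ∀ t : ℝ, ‖ξ t‖ ≠ 1)
    (hgeo : ∀ t : ℝ, ξ'' t =
      ((starRingEnd ℂ) (ξ t) / (1 - ((‖ξ t‖ : ℝ) : ℂ) ^ 2) +
        3 * (starRingEnd ℂ) (ξ t) / (1 + ((‖ξ t‖ : ℝ) : ℂ) ^ 2)) * (ξ' t) ^ 2) :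
    ∀ s t : ℝ,
      (1 - ‖ξ s‖ ^ 2) / (1 + ‖ξ s‖ ^ 2) ^ 3 *
          ((starRingEnd ℂ) (ξ s) * ξ' s).im =
      (1 - ‖ξ t‖ ^ 2) / (1 + ‖ξ t‖ ^ 2) ^ 3 *
          ((starRingEnd ℂ) (ξ t) * ξ' t).im := by
  intro s t
  set F : ℝ → ℝ := fun v => (1 - Complex.normSq (ξ v)) / (1 + Complex.normSq (ξ v)) ^ 3 *
      ((starRingEnd ℂ) (ξ v) * ξ' v).im with hFdef
  have key : ∀ u : ℝ, HasDerivAt F 0 u := by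
    intro u
    set r : ℝ := Complex.normSq (ξ u) with hrdef
    have hr0 : 0 ≤ r := Complex.normSq_nonneg _
    have hne' : r ≠ 1 := by
      rw [hrdef, ← Complex.sq_norm]
      intro h
      exact hne u (by nlinarith [norm_nonneg (ξ u)])
    have h1 : (1 : ℝ) - r ≠ 0 := sub_ne_zero.mpr (Ne.symm hne')
    have h2 : (1 : ℝ) + r ≠ 0 := by positivity
    have h2' : ((1 : ℝ) + r) ^ 3 ≠ 0 := pow_ne_zero _ h2
    have hx : HasDerivAt (fun v => (ξ v).re) ((ξ' u).re) u :=
      Complex.reCLM.hasFDerivAt.comp_hasDerivAt u (hξ u)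
    have hy : HasDerivAt (fun v => (ξ v).im) ((ξ' u).im) u :=
      Complex.imCLM.hasFDerivAt.comp_hasDerivAt u (hξ u)
    -- derivative of normSq
    have hr : HasDerivAt (fun v => Complex.normSq (ξ v))
        ((ξ' u).re * (ξ u).re + (ξ u).re * (ξ' u).re +
          ((ξ' u).im * (ξ u).im + (ξ u).im * (ξ' u).im)) u := by
      simp only [Complex.normSq_apply]
      exact (hx.mul hx).add (hy.mul hy)
    have hnum : HasDerivAt (fun v => 1 - Complex.normSq (ξ v))
        (0 - ((ξ' u).re * (ξ u).re + (ξ u).re * (ξ' u).re +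
          ((ξ' u).im * (ξ u).im + (ξ u).im * (ξ' u).im))) u :=
      (hasDerivAt_const u 1).sub hr
    have hden : HasDerivAt (fun v => (1 + Complex.normSq (ξ v)) ^ 3)
        ((3 : ℕ) * (1 + r) ^ 2 * (0 + ((ξ' u).re * (ξ u).re + (ξ u).re * (ξ' u).re +
          ((ξ' u).im * (ξ u).im + (ξ u).im * (ξ' u).im)))) u := by
      have := ((hasDerivAt_const u 1).add hr).pow 3
      exact this.congr_deriv (by simp [hrdef])
    have hfrac := hnum.div hden h2'
    -- derivative of the conjugate
    have hc : HasDerivAt (fun v => (starRingEnd ℂ) (ξ v)) ((starRingEnd ℂ) (ξ' u)) u :=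
      Complex.conjCLE.toContinuousLinearMap.hasFDerivAt.comp_hasDerivAt u (hξ u)
    have hprod : HasDerivAt (fun v => (starRingEnd ℂ) (ξ v) * ξ' v)
        ((starRingEnd ℂ) (ξ' u) * ξ' u + (starRingEnd ℂ) (ξ u) * ξ'' u) u :=
      hc.mul (hξ' u)
    have hg : HasDerivAt (fun v => ((starRingEnd ℂ) (ξ v) * ξ' v).im)
        (((starRingEnd ℂ) (ξ' u) * ξ' u + (starRingEnd ℂ) (ξ u) * ξ'' u).im) u :=
      Complex.imCLM.hasFDerivAt.comp_hasDerivAt u hprod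
    have hmain := hfrac.mul hg
    -- the geodesic equation, multiplied by conj ξ
    have h1c : (1 : ℂ) - (r : ℂ) ≠ 0 := by
      intro h
      apply h1
      have := congrArg Complex.re h
      simpa using this
    have h2c : (1 : ℂ) + (r : ℂ) ≠ 0 := by
      intro h
      apply h2
      have := congrArg Complex.re h
      simpa using this
    have hc1 : ((‖ξ u‖ : ℝ) : ℂ) ^ 2 = ((r : ℝ) : ℂ) := by
      rw [← Complex.ofReal_pow, Complex.sq_norm, hrdef]
    have e2 : (starRingEnd ℂ) (ξ u) * ξ'' u =
        (((1 / (1 - r) + 3 / (1 + r) : ℝ)) : ℂ) * ((starRingEnd ℂ) (ξ u) * ξ' u) ^ 2 := by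
      rw [hgeo u, hc1]
      push_cast
      field_simp
    have key2 : ((starRingEnd ℂ) (ξ u) * ξ'' u).im =
        (1 / (1 - r) + 3 / (1 + r)) *
          (2 * (((starRingEnd ℂ) (ξ u) * ξ' u).re * ((starRingEnd ℂ) (ξ u) * ξ' u).im)) := by
      rw [e2, sq]
      simp only [Complex.mul_im, Complex.mul_re, Complex.ofReal_re, Complex.ofReal_im]
      ring
    refine HasDerivAt.congr_deriv hmain ?_
    symm
    simp only [Pi.div_apply]
    rw [Complex.add_im, key2]
    have him0 : ((starRingEnd ℂ) (ξ' u) * ξ' u).im = 0 := by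
      simp [Complex.mul_im]
      ring
    rw [him0]
    have ha : ((starRingEnd ℂ) (ξ u) * ξ' u).re =
        (ξ u).re * (ξ' u).re + (ξ u).im * (ξ' u).im := by
      simp [Complex.mul_re]
    rw [ha]
    rw [← hrdef]
    field_simp
    ring
  have hconst := is_const_of_deriv_eq_zero
    (fun u => (key u).differentiableAt) (fun u => (key u).deriv) s t
  simpa only [hFdef, Complex.sq_norm] using hconst
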